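/- Let E be a real vector space, let Δ ⊆ E be a nonempty convex set, and let r ≥ 0 be a real number. Then in E × ℝ, convexHull( ((r • Δ) × {1}) ∪ {(0, −1)} ) = { (y, s) ∈ E × ℝ : −1 ≤ s ≤ 1 and y ∈ (r·(1+s)/2) • Δ }. -/

import Mathlib

open Pointwise

/-- Slice description of the suspended convex body:
`Conv((r • Δ) × {1} ∪ {(0,−1)}) = { (y,s) | −1 ≤ s ≤ 1 and y ∈ (r(1+s)/2) • Δ }`. -/
theorem stmt_11 (E : Type*) [AddCommGroup E] [Module ℝ E] (Δ : Set E) (hne : Δ.Nonempty)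
    (hconv : Convex ℝ Δ) (r : ℝ) (hr : 0 ≤ r) :
    convexHull ℝ ((fun a => (a, (1 : ℝ))) '' (r • Δ) ∪ {((0 : E), (-1 : ℝ))})
      = {q : E × ℝ | -1 ≤ q.2 ∧ q.2 ≤ 1 ∧ q.1 ∈ (r * (1 + q.2) / 2) • Δ} := by
  set A : Set (E × ℝ) := (fun a => (a, (1 : ℝ))) '' (r • Δ) ∪ {((0 : E), (-1 : ℝ))}
  apply Set.Subset.antisymm
  · apply convexHull_min
    · rintro q (⟨a, ha, rfl⟩ | rfl)
      · refine ⟨by norm_num, by norm_num, ?_⟩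
        simpa [show r * (1 + 1) / 2 = r by ring] using ha
      · refine ⟨le_refl _, by norm_num, ?_⟩
        simp only [show r * (1 + (-1 : ℝ)) / 2 = 0 by ring]
        rw [Set.zero_smul_set hne]
        exact rfl
    · rintro ⟨y1, s1⟩ ⟨hs1a, hs1b, x1, hx1, hxy1⟩ ⟨y2, s2⟩ ⟨hs2a, hs2b, x2, hx2, hxy2⟩
        a b ha hb hab
      simp only at hxy1 hxy2 hs1a hs1b hs2a hs2b
      subst hxy1 hxy2
      set c1 : ℝ := r * (1 + s1) / 2 with hc1
      set c2 : ℝ := r * (1 + s2) / 2 with hc2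
      have hc1n : 0 ≤ c1 := by rw [hc1]; nlinarith
      have hc2n : 0 ≤ c2 := by rw [hc2]; nlinarith
      have hgoal : a • ((c1 • x1, s1) : E × ℝ) + b • ((c2 • x2, s2) : E × ℝ)
          = ((a * c1) • x1 + (b * c2) • x2, a * s1 + b * s2) := by
        simp [Prod.ext_iff, mul_smul]
      rw [hgoal]
      refine ⟨by simp; nlinarith, by simp; nlinarith, ?_⟩
      have hceq : r * (1 + (a * s1 + b * s2)) / 2 = a * c1 + b * c2 := by
        rw [hc1, hc2]; nlinarith [hab]
      simp only [hceq]
      rw [Set.mem_smul_set]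
      set c : ℝ := a * c1 + b * c2 with hc
      rcases eq_or_lt_of_le (by positivity : (0:ℝ) ≤ c) with hc0 | hc0
      · obtain ⟨z, hz⟩ := hne
        refine ⟨z, hz, ?_⟩
        have h1 : a * c1 = 0 := by nlinarith [mul_nonneg ha hc1n, mul_nonneg hb hc2n]
        have h2 : b * c2 = 0 := by nlinarith [mul_nonneg ha hc1n, mul_nonneg hb hc2n]
        rw [h1, h2, ← hc0]
        simp
      · have hne0 : c ≠ 0 := ne_of_gt hc0
        refine ⟨(a * c1 / c) • x1 + (b * c2 / c) • x2,
          hconv hx1 hx2 (by positivity) (by positivity) (by field_simp; exact hc.symm), ?_⟩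
        rw [smul_add, smul_smul, smul_smul]
        congr 1 <;> · congr 1; field_simp
  · rintro ⟨y, s⟩ ⟨hs1, hs2, x, hx, hxy⟩
    simp only at hxy hs1 hs2
    subst hxy
    have hp : ((r • x, (1:ℝ)) : E × ℝ) ∈ A := Or.inl ⟨r • x, Set.smul_mem_smul_set hx, rfl⟩
    have hq : (((0:E), (-1:ℝ)) : E × ℝ) ∈ A := Or.inr rfl
    have hmem := (convex_convexHull ℝ A) (subset_convexHull ℝ A hp)
      (subset_convexHull ℝ A hq) (a := (1 + s)/2) (b := (1 - s)/2)
      (by linarith) (by linarith) (by ring)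
    convert hmem using 1
    ext
    · show (r * (1 + s) / 2) • x = ((1 + s)/2) • (r • x) + ((1 - s)/2) • (0:E)
      rw [smul_zero, add_zero, smul_smul]; ring_nf
    · show s = ((1 + s)/2) • (1:ℝ) + ((1 - s)/2) • (-1:ℝ)
      simp [smul_eq_mul]; ring
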